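/- For every real number t ≥ 1, one has t · arcsinh(1/sinh(log(coth(π/12) · t))) ≤ π/6; equivalently, with s := log(coth(π/12)·t), one has 2(π/3 − t · arcsinh(1/sinh s)) ≥ π/3. -/

import Mathlib

open Real

noncomputable def Real.coth (x : ℝ) : ℝ := Real.cosh x / Real.sinh x

/-- The derivative of `t ↦ t * (log (c*t+1) - log (c*t-1))` at a point `t` with `c*t > 1`. -/
lemma aux_hasDerivAt (c t : ℝ) (h : 1 < c * t) :
    HasDerivAt (fun t => t * (Real.log (c * t + 1) - Real.log (c * t - 1)))
      ((Real.log (c * t + 1) - Real.log (c * t - 1)) +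
        t * (c / (c * t + 1) - c / (c * t - 1))) t := by
  have h1 : c * t + 1 ≠ 0 := by nlinarith
  have h2 : c * t - 1 ≠ 0 := by nlinarith
  have d1 : HasDerivAt (fun t : ℝ => c * t + 1) c t := by
    simpa using ((hasDerivAt_id t).const_mul c).add_const 1
  have d2 : HasDerivAt (fun t : ℝ => c * t - 1) c t := by
    simpa using ((hasDerivAt_id t).const_mul c).sub_const 1
  have l1 : HasDerivAt (fun t : ℝ => Real.log (c * t + 1)) (c / (c * t + 1)) t :=
    (d1.log h1).congr_deriv (by ring)
  have l2 : HasDerivAt (fun t : ℝ => Real.log (c * t - 1)) (c / (c * t - 1)) t :=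
    (d2.log h2).congr_deriv (by ring)
  have := (hasDerivAt_id t).mul (l1.sub l2)
  exact this.congr_deriv (by simp)

lemma aux_key (c : ℝ) (hc : 1 < c) (t : ℝ) (ht : 1 ≤ t) :
    t * (Real.log (c * t + 1) - Real.log (c * t - 1)) ≤
      Real.log (c + 1) - Real.log (c - 1) := by
  set F : ℝ → ℝ := fun t => t * (Real.log (c * t + 1) - Real.log (c * t - 1)) with hF
  have hanti : AntitoneOn F (Set.Ici 1) := by
    apply antitoneOn_of_deriv_nonpos (convex_Ici 1)
    · intro x hx
      have hx1 : (1 : ℝ) ≤ x := hx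
      have h : 1 < c * x := by nlinarith
      exact (aux_hasDerivAt c x h).continuousAt.continuousWithinAt
    · intro x hx
      rw [interior_Ici] at hx
      have h : 1 < c * x := by nlinarith [Set.mem_Ioi.mp hx]
      exact (aux_hasDerivAt c x h).differentiableAt.differentiableWithinAt
    · intro x hx
      rw [interior_Ici] at hx
      have hx1 : (1 : ℝ) < x := hx
      have h : 1 < c * x := by nlinarith
      rw [(aux_hasDerivAt c x h).deriv]
      -- deriv = L - sinh L where L = log ((c*x+1)/(c*x-1))
      have hpos1 : (0 : ℝ) < c * x + 1 := by linarith
      have hpos2 : (0 : ℝ) < c * x - 1 := by linarith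
      have hv : 1 < (c * x + 1) / (c * x - 1) := by
        rw [lt_div_iff₀ hpos2]; linarith
      have hL : 0 < Real.log ((c * x + 1) / (c * x - 1)) := Real.log_pos hv
      have hlog : Real.log ((c * x + 1) / (c * x - 1)) =
          Real.log (c * x + 1) - Real.log (c * x - 1) :=
        Real.log_div (ne_of_gt hpos1) (ne_of_gt hpos2)
      have hsinh : Real.sinh (Real.log ((c * x + 1) / (c * x - 1))) =
          2 * (c * x) / ((c * x) ^ 2 - 1) := by
        have h2 : -1 + c ^ 2 * x ^ 2 ≠ 0 := by nlinarith
        rw [Real.sinh_log (by positivity)]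
        rw [inv_div]
        field_simp
        ring_nf
        field_simp
      have hlt : Real.log ((c * x + 1) / (c * x - 1)) <
          Real.sinh (Real.log ((c * x + 1) / (c * x - 1))) :=
        Real.self_lt_sinh_iff.mpr hL
      rw [hsinh, hlog] at hlt
      have hxc : x * (c / (c * x + 1) - c / (c * x - 1)) =
          -(2 * (c * x) / ((c * x) ^ 2 - 1)) := by
        have h2 : (c * x) ^ 2 - 1 ≠ 0 := by nlinarith
        have h3 : c * x + 1 ≠ 0 := by linarith
        have h4 : c * x - 1 ≠ 0 := by linarith
        rw [div_sub_div _ _ h3 h4, neg_div', mul_div_assoc', div_eq_div_iff (mul_ne_zero h3 h4) h2]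
        ring
      rw [hxc]
      linarith
  have := hanti (Set.self_mem_Ici) (Set.mem_Ici.mpr ht) ht
  simpa [hF] using this

theorem mul_arsinh_inv_sinh_log_coth_le (t : ℝ) (ht : 1 ≤ t) :
    t * Real.arsinh (1 / Real.sinh (Real.log (Real.coth (Real.pi / 12) * t))) ≤
      Real.pi / 6 ∧
    2 * (Real.pi / 3 -
        t * Real.arsinh (1 / Real.sinh (Real.log (Real.coth (Real.pi / 12) * t)))) ≥
      Real.pi / 3 := by
  set u : ℝ := Real.pi / 12 with hu
  set c : ℝ := Real.coth u with hcdef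
  have hupos : 0 < u := by positivity
  have hsinhu : 0 < Real.sinh u := Real.sinh_pos_iff.mpr hupos
  have hc1 : 1 < c := by
    rw [hcdef, Real.coth, lt_div_iff₀ hsinhu, one_mul]
    exact Real.sinh_lt_cosh u
  have hct : 1 < c * t := by nlinarith
  have hctpos : 0 < c * t := by linarith
  -- Step 1 : arsinh (1 / sinh (log (c*t))) = log ((c*t+1)/(c*t-1))
  have hstep1 : Real.arsinh (1 / Real.sinh (Real.log (c * t))) =
      Real.log ((c * t + 1) / (c * t - 1)) := by
    have hv : (0 : ℝ) < (c * t + 1) / (c * t - 1) := by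
      apply div_pos <;> linarith
    have h1 : Real.sinh (Real.log ((c * t + 1) / (c * t - 1))) =
        1 / Real.sinh (Real.log (c * t)) := by
      rw [Real.sinh_log hv, Real.sinh_log hctpos, inv_div]
      have h2 : -1 + c ^ 2 * t ^ 2 ≠ 0 := by nlinarith
      have h3 : c * t - 1 ≠ 0 := by linarith
      have h4 : c * t + 1 ≠ 0 := by linarith
      field_simp
      ring_nf
      field_simp
    rw [← h1, Real.arsinh_sinh]
  -- Step 2 : log ((c+1)/(c-1)) = 2*u = π/6
  have hstep2 : Real.log (c + 1) - Real.log (c - 1) = Real.pi / 6 := by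
    have h1 : c + 1 = (Real.cosh u + Real.sinh u) / Real.sinh u := by
      rw [hcdef, Real.coth]; field_simp
    have h2 : c - 1 = (Real.cosh u - Real.sinh u) / Real.sinh u := by
      rw [hcdef, Real.coth]; field_simp
    rw [h1, h2, Real.cosh_add_sinh, Real.cosh_sub_sinh,
      Real.log_div (Real.exp_ne_zero u) (ne_of_gt hsinhu),
      Real.log_div (Real.exp_ne_zero (-u)) (ne_of_gt hsinhu),
      Real.log_exp, Real.log_exp]
    rw [hu]; ring
  have hmain : t * Real.arsinh (1 / Real.sinh (Real.log (c * t))) ≤ Real.pi / 6 := by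
    rw [hstep1, Real.log_div (by linarith) (by linarith)]
    calc t * (Real.log (c * t + 1) - Real.log (c * t - 1)) ≤
        Real.log (c + 1) - Real.log (c - 1) := aux_key c hc1 t ht
      _ = Real.pi / 6 := hstep2
  exact ⟨hmain, by linarith⟩
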